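/- Let G ≤ Aut(T) be a regular branch group, let k < m be natural numbers, let u be a vertex of length m, and let H be a subgroup of G such that every element of H ∩ Stab_G(k) fixes every vertex having u as a prefix. Then H has infinite index in G. -/

import Mathlib

/-- Vertices of the `d`-regular rooted tree: finite words over `Fin d`. -/
abbrev Vtx (d : ℕ) := List (Fin d)

/-- A permutation of the vertex set is a tree automorphism if it fixes the root and
maps children of a vertex to children of its image. -/
def IsTreeAut (d : ℕ) (g : Equiv.Perm (Vtx d)) : Prop :=
  g [] = [] ∧ ∀ (v : Vtx d) (x : Fin d), ∃ y : Fin d, g (v ++ [x]) = g v ++ [y]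

/-- The initial raySegment of length `n` of a boundary point `ξ : ℕ → Fin d`. -/
def raySegment {d : ℕ} (ξ : ℕ → Fin d) (n : ℕ) : Vtx d := List.ofFn fun i : Fin n => ξ i

/-- The vertices at level `n`. -/
abbrev Level (d n : ℕ) := {v : Vtx d // v.length = n}

/-- A group of tree automorphisms is spherically transitive if it acts transitively on
each level. -/
def SphericallyTransitive {d : ℕ} (G : Subgroup (Equiv.Perm (Vtx d))) : Prop :=
  ∀ u v : Vtx d, u.length = v.length → ∃ g ∈ G, g u = v

/-- A group of tree automorphisms is self-similar if all sections of its elements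
belong to it. -/
def SelfSimilar {d : ℕ} (G : Subgroup (Equiv.Perm (Vtx d))) : Prop :=
  ∀ g ∈ G, ∀ v : Vtx d, ∃ h ∈ G, ∀ w : Vtx d, g (v ++ w) = g v ++ h w

/-- The image of `H ∩ Stab(n)` under the map `ψₙ` sending an automorphism fixing level `n`
to the tuple of its sections at the vertices of level `n`. -/
def psiImage {d : ℕ} (H : Subgroup (Equiv.Perm (Vtx d))) (n : ℕ) :
    Subgroup (Level d n → Equiv.Perm (Vtx d)) where
  carrier := {h | ∃ g ∈ H, (∀ v : Level d n, g v.1 = v.1) ∧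
      ∀ (v : Level d n) (w : Vtx d), g (v.1 ++ w) = v.1 ++ h v w}
  one_mem' := ⟨1, H.one_mem, fun _ => rfl, fun _ _ => rfl⟩
  mul_mem' := by
    rintro a b ⟨g, hg, hgf, hga⟩ ⟨g', hg', hg'f, hg'a⟩
    refine ⟨g * g', H.mul_mem hg hg', fun v => ?_, fun v w => ?_⟩
    · rw [Equiv.Perm.mul_apply, hg'f v, hgf v]
    · rw [Equiv.Perm.mul_apply, hg'a v w, hga v (b v w)]; rfl
  inv_mem' := by
    rintro a ⟨g, hg, hgf, hga⟩
    refine ⟨g⁻¹, H.inv_mem hg, fun v => ?_, fun v w => ?_⟩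
    · apply g.injective
      rw [show ∀ x, g (g⁻¹ x) = x from Equiv.apply_symm_apply g, hgf v]
    · apply g.injective
      rw [show ∀ x, g (g⁻¹ x) = x from Equiv.apply_symm_apply g, hga v (a⁻¹ v w)]
      show v.1 ++ w = v.1 ++ a v ((a v)⁻¹ w)
      rw [show ∀ x, a v ((a v)⁻¹ x) = x from Equiv.apply_symm_apply (a v)]

/-- `G ≤ Aut(T)` is regular branch over `K` if it consists of tree automorphisms, is
spherically transitive and self-similar, and `K ≤ G` is a finite-index subgroup such that
`ψ₁(K ∩ Stab(1))` contains `K^d` as a subgroup of finite index. -/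
structure IsRegularBranch (d : ℕ) (G K : Subgroup (Equiv.Perm (Vtx d))) : Prop where
  treeAut : ∀ g ∈ G, IsTreeAut d g
  transitive : SphericallyTransitive G
  selfSimilar : SelfSimilar G
  le : K ≤ G
  relindex_ne_zero : K.relIndex G ≠ 0
  pi_le : Subgroup.pi Set.univ (fun _ : Level d 1 => K) ≤ psiImage K 1
  pi_relindex_ne_zero :
    (Subgroup.pi Set.univ (fun _ : Level d 1 => K)).relIndex (psiImage K 1) ≠ 0

/-- `H` is a weakly maximal subgroup of (the subgroup) `G` if `H ≤ G`, `H` has infinite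
index in `G`, and every subgroup of `G` strictly containing `H` has finite index in `G`. -/
def IsWeaklyMaximalIn {P : Type*} [Group P] (G H : Subgroup P) : Prop :=
  H ≤ G ∧ H.relIndex G = 0 ∧
    ∀ M : Subgroup P, M ≤ G → H < M → M.relIndex G ≠ 0

/-- The stabilizer in `G` of a boundary point `ξ` (a parabolic subgroup). -/
def rayStab {d : ℕ} (G : Subgroup (Equiv.Perm (Vtx d))) (ξ : ℕ → Fin d) :
    Subgroup (Equiv.Perm (Vtx d)) where
  carrier := {g | g ∈ G ∧ ∀ n : ℕ, g (raySegment ξ n) = raySegment ξ n}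
  one_mem' := ⟨G.one_mem, fun _ => rfl⟩
  mul_mem' := by
    rintro a b ⟨ha, ha2⟩ ⟨hb, hb2⟩
    exact ⟨G.mul_mem ha hb, fun n => by rw [Equiv.Perm.mul_apply, hb2 n, ha2 n]⟩
  inv_mem' := by
    rintro a ⟨ha, ha2⟩
    refine ⟨G.inv_mem ha, fun n => ?_⟩
    conv_lhs => rw [← ha2 n]
    exact Equiv.symm_apply_apply a (raySegment ξ n)

/-- The rigid stabilizer of a vertex `v` in `G`: elements of `G` fixing every vertex not
having `v` as a prefix. -/
def rist {d : ℕ} (G : Subgroup (Equiv.Perm (Vtx d))) (v : Vtx d) :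
    Subgroup (Equiv.Perm (Vtx d)) where
  carrier := {g | g ∈ G ∧ ∀ w : Vtx d, ¬ v <+: w → g w = w}
  one_mem' := ⟨G.one_mem, fun _ _ => rfl⟩
  mul_mem' := by
    rintro a b ⟨ha, ha2⟩ ⟨hb, hb2⟩
    exact ⟨G.mul_mem ha hb, fun w hw => by rw [Equiv.Perm.mul_apply, hb2 w hw, ha2 w hw]⟩
  inv_mem' := by
    rintro a ⟨ha, ha2⟩
    refine ⟨G.inv_mem ha, fun w hw => ?_⟩
    conv_lhs => rw [← ha2 w hw]
    exact Equiv.symm_apply_apply a w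

/-- Placement lemma: any `h ∈ K` can be realized below any vertex `u`, acting trivially
elsewhere. -/
lemma placement_aux {d : ℕ} {G K : Subgroup (Equiv.Perm (Vtx d))}
    (hGK : IsRegularBranch d G K) (u : Vtx d) (h : Equiv.Perm (Vtx d)) (hh : h ∈ K) :
    ∃ g ∈ K, (∀ w : Vtx d, ¬ u <+: w → g w = w) ∧ ∀ w : Vtx d, g (u ++ w) = u ++ h w := by
  classical
  induction u generalizing h with
  | nil =>
    exact ⟨h, hh, fun w hw => absurd List.nil_prefix hw, fun w => rfl⟩
  | cons x u' ih =>
    obtain ⟨g', hg'K, hg'fix, hg'app⟩ := ih h hh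
    set t : Level d 1 → Equiv.Perm (Vtx d) := fun v => if v.1 = [x] then g' else 1 with ht
    have htmem : t ∈ Subgroup.pi Set.univ (fun _ : Level d 1 => K) := by
      intro v _
      by_cases hv : v.1 = [x] <;> simp [ht, hv, hg'K, Subgroup.one_mem]
    obtain ⟨g, hgK, hgfix, hgapp⟩ := hGK.pi_le htmem
    refine ⟨g, hgK, ?_, ?_⟩
    · intro w hw
      match w with
      | [] => exact (hGK.treeAut g (hGK.le hgK)).1
      | y :: w' =>
        have hthis := hgapp ⟨[y], rfl⟩ w'
        by_cases hyx : y = x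
        · subst hyx
          have hnw : ¬ u' <+: w' := fun hp => hw (List.cons_prefix_cons.mpr ⟨rfl, hp⟩)
          simpa [ht, hg'fix w' hnw] using hthis
        · simpa [ht, hyx] using hthis
    · intro w
      have hthis := hgapp ⟨[x], rfl⟩ (u' ++ w)
      simpa [ht, hg'app w] using hthis

/-- A spherically transitive group is infinite.  -/
lemma sphericallyTransitive_infinite {d : ℕ} (hd : 2 ≤ d)
    {G : Subgroup (Equiv.Perm (Vtx d))} (htr : SphericallyTransitive G) : Infinite G := by
  rw [← not_finite_iff_infinite]
  intro hfin
  set n := Nat.card G + 1 with hn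
  have key : ∀ c : Fin n → Fin d, ∃ g : G,
      (g : Equiv.Perm (Vtx d)) (List.ofFn fun _ : Fin n => (⟨0, by omega⟩ : Fin d))
        = List.ofFn c := by
    intro c
    obtain ⟨g, hgG, hg⟩ := htr (List.ofFn fun _ : Fin n => (⟨0, by omega⟩ : Fin d))
      (List.ofFn c) (by simp)
    exact ⟨⟨g, hgG⟩, hg⟩
  choose f hf using key
  have hinj : Function.Injective f := by
    intro a b hab
    have h1 : (List.ofFn a : Vtx d) = List.ofFn b := by rw [← hf a, ← hf b, hab]
    exact List.ofFn_injective h1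
  have hle : Nat.card (Fin n → Fin d) ≤ Nat.card G := Nat.card_le_card_of_injective f hinj
  have hcard : Nat.card (Fin n → Fin d) = d ^ n := by
    simp [Nat.card_eq_fintype_card]
  have hlt : n < d ^ n := Nat.lt_pow_self (by omega)
  omega

/-- If every element of `H ∩ Stab_G(k)` fixes the subtree below a vertex `u` of level
`m > k`, then `H` has infinite index in the regular branch group `G`. -/
theorem relindex_zero_of_fixes_subtree {d : ℕ} (hd : 2 ≤ d)
    (G K : Subgroup (Equiv.Perm (Vtx d))) (hGK : IsRegularBranch d G K)
    (k m : ℕ) (hkm : k < m) (u : Vtx d) (hu : u.length = m)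
    (H : Subgroup (Equiv.Perm (Vtx d))) (hHG : H ≤ G)
    (hfix : ∀ g ∈ H, (∀ v : Vtx d, v.length = k → g v = v) →
      ∀ w : Vtx d, u <+: w → g w = w) :
    H.relIndex G = 0 := by
  classical
  set L := K ⊓ rist G u with hL
  have hLG : L ≤ G := le_trans inf_le_left hGK.le
  -- any element of L ∩ H is trivial
  have hLH : ∀ g ∈ L, g ∈ H → g = 1 := by
    intro g hgL hgH
    have hgr : g ∈ rist G u := (Subgroup.mem_inf.mp hgL).2
    have hgr2 : ∀ w : Vtx d, ¬ u <+: w → g w = w := hgr.2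
    have hfixk : ∀ v : Vtx d, v.length = k → g v = v := by
      intro v hv
      refine hgr2 v fun hp => ?_
      have := hp.length_le
      omega
    have hall : ∀ w, g w = w := by
      intro w
      by_cases hp : u <+: w
      · exact hfix g hgH hfixk w hp
      · exact hgr2 w hp
    exact Equiv.ext hall
  -- K is infinite
  have hGinf : Infinite G := sphericallyTransitive_infinite hd hGK.transitive
  have hKcard : Nat.card (K.subgroupOf G) = 0 := by
    have hmul := Subgroup.card_mul_index (K.subgroupOf G)
    have hGcard : Nat.card G = 0 := Nat.card_eq_zero_of_infinite
    have hidx : (K.subgroupOf G).index ≠ 0 := hGK.relindex_ne_zero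
    rw [hGcard] at hmul
    exact by
      rcases Nat.mul_eq_zero.mp hmul with h | h
      · exact h
      · exact absurd h hidx
  have hKinf : Infinite K := by
    have hcongr : Nat.card K = 0 := by
      rw [← Nat.card_congr (Subgroup.subgroupOfEquivOfLe hGK.le).toEquiv]
      exact hKcard
    rcases Nat.card_eq_zero.mp hcongr with h | h
    · exact (h.elim ⟨1, K.one_mem⟩)
    · exact h
  -- L is infinite
  have keyL : ∀ h : K, ∃ g : L, ∀ w : Vtx d,
      (g : Equiv.Perm (Vtx d)) (u ++ w) = u ++ (h : Equiv.Perm (Vtx d)) w := by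
    intro h
    obtain ⟨g, hgK, hgfix, hgapp⟩ := placement_aux hGK u h h.2
    exact ⟨⟨g, Subgroup.mem_inf.mpr ⟨hgK, ⟨hGK.le hgK, hgfix⟩⟩⟩, hgapp⟩
  choose f hf using keyL
  have hfinj : Function.Injective f := by
    intro a b hab
    have : ∀ w : Vtx d, (a : Equiv.Perm (Vtx d)) w = (b : Equiv.Perm (Vtx d)) w := by
      intro w
      have h1 := hf a w
      have h2 := hf b w
      rw [hab] at h1
      rw [h1] at h2
      exact List.append_cancel_left h2
    exact Subtype.ext (Equiv.ext this)
  have hLinf : Infinite L := Infinite.of_injective f hfinj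
  -- conclude
  by_contra h0
  have hbot : H.subgroupOf L = ⊥ := by
    ext x
    simp only [Subgroup.mem_subgroupOf, Subgroup.mem_bot]
    constructor
    · intro hx
      exact Subtype.ext (hLH x.1 x.2 hx)
    · rintro rfl
      exact H.one_mem
  have h1 : H.relIndex L = 0 := by
    show (H.subgroupOf L).index = 0
    rw [hbot, Subgroup.index_bot]
    exact Nat.card_eq_zero_of_infinite
  exact h0 (Subgroup.relIndex_eq_zero_of_le_right hLG h1)
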